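/- Let P be any element of the k-subalgebra of End_k(R) generated by { ∂^{β^a} : a ∈ ℤ }, and let b ∈ ℤ. Then there exists Q in the same subalgebra such that Q∘λ_x − λ_x∘Q = P∘σ_b. Consequently, for every f ∈ R one has (λ_f∘Q)∘λ_x − λ_x∘(λ_f∘Q) = λ_f∘P∘σ_b. -/

import Mathlib

open Polynomial

noncomputable section

namespace QDiff1

variable (k : Type*) [Field k]

/-- Left multiplication operator `λ_r`. -/
def lmul (r : k[X]) : Module.End k k[X] := LinearMap.mulLeft k r

variable {k}

/-- The automorphism `σ_a`, acting on `x^b` by `q^(a*b)`. -/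
def sigma (q : k) (a : ℤ) : Module.End k k[X] :=
  (aeval (C (q ^ a) * X) : k[X] →ₐ[k] k[X]).toLinearMap

/-- The operator `∂^{β^a}`, sending `x^b` to `(1 + q^a + ⋯ + q^{a(b-1)}) x^(b-1)`. -/
def dq (q : k) (a : ℤ) : Module.End k k[X] :=
  (Polynomial.basisMonomials k).constr k
    fun b => (∑ i ∈ Finset.range b, q ^ (a * (i : ℤ))) • X ^ (b - 1)

/-- `φ` is homogeneous of degree `a : ℤ`. -/
def IsHomog (a : ℤ) (φ : Module.End k k[X]) : Prop :=
  ∀ b : ℕ, ∃ c : k, φ (X ^ b) = c • (if 0 ≤ a + (b : ℤ) then X ^ (a + (b : ℤ)).toNat else 0)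

/-- `M` is closed under `φ ↦ λ_r ∘ φ ∘ λ_s`. -/
def Closed (M : Submodule k (Module.End k k[X])) : Prop :=
  ∀ r s : k[X], ∀ φ ∈ M, lmul k r * φ * lmul k s ∈ M

/-- The filtration `D_q^n` of `q`-differential operators on `k[x]`. -/
def Dq (q : k) : ℕ → Submodule k (Module.End k k[X])
  | 0 => sInf {M | Closed M ∧
      {φ : Module.End k k[X] | ∃ a : ℤ, IsHomog a φ ∧ ∀ b : ℕ,
        φ * lmul k (X ^ b) = q ^ (a * (b : ℤ)) • (lmul k (X ^ b) * φ)} ⊆ ↑M}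
  | n + 1 => sInf {M | Closed M ∧ Dq q n ≤ M ∧
      {φ : Module.End k k[X] | ∃ a : ℤ, IsHomog a φ ∧ ∀ b : ℕ,
        φ * lmul k (X ^ b) - q ^ (a * (b : ℤ)) • (lmul k (X ^ b) * φ) ∈ Dq q n} ⊆ ↑M}




lemma bm_apply (n : ℕ) : (Polynomial.basisMonomials k) n = X ^ n := by
  rw [coe_basisMonomials]; exact (X_pow_eq_monomial n).symm

/-- generic operator with coefficient function `F`, lowering degree by `m`. -/
def op (q : k) (m : ℕ) (F : ℕ → k) : Module.End k k[X] :=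
  (Polynomial.basisMonomials k).constr k fun n => F n • X ^ (n - m)

lemma op_apply (q : k) (m : ℕ) (F : ℕ → k) (n : ℕ) :
    op q m F (X ^ n) = F n • X ^ (n - m) := by
  rw [← bm_apply]; exact Module.Basis.constr_basis _ _ _ _

lemma end_ext {f g : Module.End k k[X]} (h : ∀ n : ℕ, f (X ^ n) = g (X ^ n)) : f = g := by
  apply (Polynomial.basisMonomials k).ext
  intro n; rw [bm_apply]; exact h n

lemma op_add (q : k) (m : ℕ) (F G : ℕ → k) :
    op q m (F + G) = op q m F + op q m G := by
  apply end_ext; intro n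
  simp [op_apply, add_smul]

lemma op_smul (q : k) (m : ℕ) (c : k) (F : ℕ → k) :
    op q m (c • F) = c • op q m F := by
  apply end_ext; intro n
  simp [op_apply, smul_smul]

lemma op_mul_op (q : k) (m m' : ℕ) (F F' : ℕ → k) :
    op q m F * op q m' F' = op q (m + m') (fun n => F' n * F (n - m')) := by
  apply end_ext; intro n
  rw [Module.End.mul_apply, op_apply, map_smul, op_apply, op_apply, smul_smul]
  congr 2
  omega

lemma lmul_X_pow (n : ℕ) : lmul k X (X ^ n) = X ^ (n + 1) := by
  simp [lmul, LinearMap.mulLeft_apply, pow_succ, mul_comm]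

lemma op_mul_lmulX (q : k) (m : ℕ) (G : ℕ → k) :
    op q (m + 1) G * lmul k X = op q m (fun n => G (n + 1)) := by
  apply end_ext; intro n
  rw [Module.End.mul_apply, lmul_X_pow, op_apply, op_apply]
  congr 2
  omega

lemma lmulX_mul_op (q : k) (m : ℕ) (G : ℕ → k) (h : ∀ n, n ≤ m → G n = 0) :
    lmul k X * op q (m + 1) G = op q m G := by
  apply end_ext; intro n
  rw [Module.End.mul_apply, op_apply, map_smul, lmul_X_pow, op_apply]
  rcases le_or_gt n m with hn | hn
  · rw [h n hn]; simp
  · congr 2; omega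

lemma op_comm_lmulX (q : k) (m : ℕ) (G : ℕ → k) (h : ∀ n, n ≤ m → G n = 0) :
    op q (m + 1) G * lmul k X - lmul k X * op q (m + 1) G
      = op q m (fun n => G (n + 1) - G n) := by
  rw [op_mul_lmulX, lmulX_mul_op q m G h]
  apply end_ext; intro n
  simp [op_apply, sub_smul, LinearMap.sub_apply]

lemma sigma_eq_op (q : k) (hq : q ≠ 0) (b : ℤ) :
    sigma q b = op q 0 (fun n => q ^ (b * (n : ℤ))) := by
  apply end_ext; intro n
  simp only [sigma, AlgHom.toLinearMap_apply, map_pow, aeval_X, op_apply, Nat.sub_zero]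
  rw [mul_pow, ← C_pow, ← zpow_natCast (q ^ b) n, ← zpow_mul]
  rw [smul_eq_C_mul]

lemma op_mul_sigma (q : k) (hq : q ≠ 0) (m : ℕ) (F : ℕ → k) (b : ℤ) :
    op q m F * sigma q b = op q m (fun n => q ^ (b * (n : ℤ)) * F n) := by
  rw [sigma_eq_op q hq b]
  rw [op_mul_op]
  apply end_ext; intro n
  simp [op_apply]

lemma dq_eq_op (q : k) (a : ℤ) :
    dq q a = op q 1 (fun n => ∑ i ∈ Finset.range n, q ^ (a * (i : ℤ))) := rfl

lemma dq_mul_op (q : k) (c : ℤ) (m : ℕ) (H : ℕ → k) :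
    dq q c * op q m H
      = op q (m + 1) (fun n => H n * ∑ i ∈ Finset.range (n - m), q ^ (c * (i : ℤ))) := by
  rw [dq_eq_op, op_mul_op]
  apply end_ext; intro n
  rw [op_apply, op_apply]
  congr 2
  omega

lemma op_const_one (q : k) : op q 0 (fun _ => (1 : k)) = 1 := by
  apply end_ext; intro n
  simp [op_apply]



/-- pure power function -/
def pw (j : ℕ) : ℕ → k := fun n => (n : k) ^ j

/-- exponential function -/
def ex (q : k) (c : ℤ) : ℕ → k := fun n => q ^ (c * (n : ℤ))

/-- basic exponential-polynomial monomial -/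
def mof (q : k) (c : ℤ) (j : ℕ) : ℕ → k := fun n => (n : k) ^ j * q ^ (c * (n : ℤ))

/-- generating set for level `m` -/
def SS (q : k) (m : ℕ) : Set (ℕ → k) :=
  {f | ∃ c j, (c = 0 → j ≤ m) ∧ (c ≠ 0 → j + 1 ≤ m) ∧ f = mof q c j}

/-- polynomial functions of degree at most `d` -/
def PolyD (k : Type*) [Field k] (d : ℕ) : Submodule k (ℕ → k) :=
  Submodule.span k {f | ∃ j ≤ d, f = pw j}

/-- falling-factorial function -/
def ffp (k : Type*) [Field k] (m : ℕ) : ℕ → k := fun n => ∏ i ∈ Finset.range m, ((n : k) - i)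

lemma polyD_mono {d d' : ℕ} (h : d ≤ d') : PolyD k d ≤ PolyD k d' := by
  apply Submodule.span_mono
  rintro f ⟨j, hj, rfl⟩
  exact ⟨j, hj.trans h, rfl⟩

lemma pw_mem {j d : ℕ} (h : j ≤ d) : (pw j : ℕ → k) ∈ PolyD k d :=
  Submodule.subset_span ⟨j, h, rfl⟩

lemma polyD_mul_linear {d : ℕ} {f : ℕ → k} (hf : f ∈ PolyD k d) (c : k) :
    (fun n => f n * ((n : k) - c)) ∈ PolyD k (d + 1) := by
  induction hf using Submodule.span_induction with
  | mem x hx =>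
      obtain ⟨j, hj, rfl⟩ := hx
      have : (fun n => pw j n * ((n:k) - c)) = (pw (j+1) : ℕ → k) + (-c) • pw j := by
        funext n; simp [pw, pow_succ]; ring
      rw [this]
      refine Submodule.add_mem _ ?_ ?_
      · exact pw_mem (by omega)
      · exact Submodule.smul_mem (PolyD k (d+1)) (-c) (pw_mem (j:=j) (d:=d+1) (by omega))
  | zero =>
      have : (fun n => (0 : ℕ → k) n * ((n:k) - c)) = (0 : ℕ → k) := by funext n; simp
      rw [this]; exact Submodule.zero_mem _
  | add x y hx hy ihx ihy =>
      have : (fun n => (x + y) n * ((n:k) - c))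
          = (fun n => x n * ((n:k) - c)) + fun n => y n * ((n:k) - c) := by
        funext n; simp [add_mul]
      rw [this]; exact add_mem ihx ihy
  | smul a x hx ihx =>
      have : (fun n => (a • x) n * ((n:k) - c)) = a • fun n => x n * ((n:k) - c) := by
        funext n; simp [mul_assoc]
      rw [this]; exact Submodule.smul_mem _ _ ihx

lemma ffp_mem (m : ℕ) : ffp k m ∈ PolyD k m := by
  induction m with
  | zero =>
      have : ffp k 0 = (pw 0 : ℕ → k) := by funext n; simp [ffp, pw]
      rw [this]; exact pw_mem le_rfl
  | succ m ih =>
      have : ffp k (m+1) = fun n => ffp k m n * ((n:k) - m) := by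
        funext n; simp [ffp, Finset.prod_range_succ]
      rw [this]; exact polyD_mul_linear ih _

lemma ffp_vanish {m n : ℕ} (h : n < m) : ffp k m n = 0 := by
  apply Finset.prod_eq_zero (Finset.mem_range.mpr h)
  simp

lemma ffp_cast {m n : ℕ} (h : m ≤ n) : ffp k m n = ((n.descFactorial m : ℕ) : k) := by
  rw [Nat.descFactorial_eq_prod_range, Nat.cast_prod, ffp]
  apply Finset.prod_congr rfl
  intro i hi
  rw [Finset.mem_range] at hi
  rw [Nat.cast_sub (by omega)]

lemma ffp_self (m : ℕ) : ffp k m m = (m.factorial : k) := by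
  rw [ffp_cast le_rfl, Nat.descFactorial_self]

/-- polynomial representation of PolyD members -/
lemma polyD_rep {d : ℕ} {f : ℕ → k} (hf : f ∈ PolyD k d) :
    ∃ p : k[X], p.natDegree ≤ d ∧ ∀ n : ℕ, f n = p.eval (n : k) := by
  induction hf using Submodule.span_induction with
  | mem x hx =>
      obtain ⟨j, hj, rfl⟩ := hx
      exact ⟨X ^ j, by simpa using hj, fun n => by simp [pw]⟩
  | zero => exact ⟨0, by simp, fun n => by simp⟩
  | add x y hx hy ihx ihy =>
      obtain ⟨p, hp, hpe⟩ := ihx; obtain ⟨r, hr, hre⟩ := ihy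
      exact ⟨p + r, (Polynomial.natDegree_add_le p r).trans (by omega),
        fun n => by simp [hpe n, hre n]⟩
  | smul a x hx ihx =>
      obtain ⟨p, hp, hpe⟩ := ihx
      exact ⟨a • p, (Polynomial.natDegree_smul_le a p).trans hp,
        fun n => by simp [hpe n]⟩

lemma rep_polyD {d : ℕ} (p : k[X]) (hp : p.natDegree ≤ d) :
    (fun n : ℕ => p.eval (n : k)) ∈ PolyD k d := by
  have : (fun n : ℕ => p.eval (n : k))
      = fun n : ℕ => ∑ j ∈ Finset.range (d + 1), p.coeff j * (n : k) ^ j := by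
    funext n
    exact Polynomial.eval_eq_sum_range' (by omega) _
  rw [this]
  have : (fun n : ℕ => ∑ j ∈ Finset.range (d + 1), p.coeff j * (n:k) ^ j)
      = ∑ j ∈ Finset.range (d + 1), p.coeff j • (pw j : ℕ → k) := by
    funext n; simp [pw]
  rw [this]
  exact Submodule.sum_mem _ fun j hj =>
    Submodule.smul_mem _ _ (pw_mem (by simp at hj; omega))

/-- a polynomial function of degree ≤ d vanishing at 0..d is zero -/
lemma polyD_eq_zero [CharZero k] {d : ℕ} {f : ℕ → k} (hf : f ∈ PolyD k d)
    (h : ∀ n, n ≤ d → f n = 0) : f = 0 := by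
  obtain ⟨p, hp, hpe⟩ := polyD_rep hf
  have hp0 : p = 0 := by
    apply Polynomial.eq_zero_of_natDegree_lt_card_of_eval_eq_zero p
      (f := fun i : Fin (d+1) => ((i : ℕ) : k))
      (fun i j hij => by
        have : (i : ℕ) = (j : ℕ) := Nat.cast_injective hij
        exact Fin.val_injective this)
      (fun i => by rw [← hpe]; exact h i (by omega))
    simpa using by omega
  funext n; rw [hpe n, hp0]; simp


lemma interp [CharZero k] (f : ℕ → k) (m : ℕ) :
    ∃ ρ ∈ PolyD k m, ∀ n, n < m → ρ n = f n := by
  induction m with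
  | zero => exact ⟨0, Submodule.zero_mem _, fun n h => absurd h (by omega)⟩
  | succ m ih =>
      obtain ⟨ρ, hρ, hval⟩ := ih
      refine ⟨ρ + ((f m - ρ m) / (m.factorial : k)) • ffp k m,
        Submodule.add_mem _ (polyD_mono (by omega) hρ)
          (Submodule.smul_mem _ _ (polyD_mono (by omega) (ffp_mem m))), ?_⟩
      intro n hn
      rcases lt_or_eq_of_le (Nat.lt_succ_iff.mp hn) with h | h
      · simp only [Pi.add_apply, Pi.smul_apply, smul_eq_mul, ffp_vanish h, mul_zero, add_zero]
        exact hval n h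
      · subst h
        simp only [Pi.add_apply, Pi.smul_apply, smul_eq_mul, ffp_self]
        have : (Nat.factorial n : k) ≠ 0 := Nat.cast_ne_zero.mpr (Nat.factorial_ne_zero n)
        field_simp
        ring
  
lemma polyD_vanish_eq [CharZero k] {m : ℕ} {w : ℕ → k} (hw : w ∈ PolyD k (m+1))
    (h : ∀ n, n ≤ m → w n = 0) :
    w = (w (m+1) / ((m+1).factorial : k)) • ffp k (m+1) := by
  set c := w (m+1) / ((m+1).factorial : k) with hc
  have hsub : w - c • ffp k (m+1) ∈ PolyD k (m+1) :=
    Submodule.sub_mem _ hw (Submodule.smul_mem _ _ (ffp_mem (m+1)))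
  have hz : w - c • ffp k (m+1) = 0 := by
    apply polyD_eq_zero hsub
    intro n hn
    rcases lt_or_eq_of_le hn with h1 | h1
    · have h2 : n ≤ m := by omega
      simp [h n h2, ffp_vanish (show n < m + 1 by omega)]
    · subst h1
      have : ((m+1).factorial : k) ≠ 0 := Nat.cast_ne_zero.mpr (Nat.factorial_ne_zero _)
      simp only [Pi.sub_apply, Pi.smul_apply, smul_eq_mul, ffp_self, hc]
      field_simp
      ring
  have := sub_eq_zero.mp hz
  exact this

/-! ### summation operator -/

def SigL (k : Type*) [Field k] : (ℕ → k) →ₗ[k] (ℕ → k) where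
  toFun F := fun n => ∑ i ∈ Finset.range n, F i
  map_add' F G := by funext n; simp [Finset.sum_add_distrib]
  map_smul' a F := by funext n; simp [Finset.mul_sum]

lemma SigL_apply (F : ℕ → k) (n : ℕ) : SigL k F n = ∑ i ∈ Finset.range n, F i := rfl

lemma SigL_del (F : ℕ → k) : SigL k (fun n => F (n+1) - F n) = fun n => F n - F 0 := by
  funext n
  exact Finset.sum_range_sub F n

/-- pointwise multiplication as a linear map -/
def mulF (w : ℕ → k) : (ℕ → k) →ₗ[k] (ℕ → k) where
  toFun F := fun n => F n * w n
  map_add' F G := by funext n; simp [add_mul]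
  map_smul' a F := by funext n; simp [smul_eq_mul, mul_assoc]

lemma mulF_apply (w F : ℕ → k) (n : ℕ) : mulF w F n = F n * w n := rfl

lemma span_map (T : (ℕ → k) →ₗ[k] (ℕ → k)) {S S' : Set (ℕ → k)}
    (h : ∀ f ∈ S, T f ∈ Submodule.span k S') {F : ℕ → k}
    (hF : F ∈ Submodule.span k S) : T F ∈ Submodule.span k S' := by
  have h1 : T F ∈ Submodule.map T (Submodule.span k S) := Submodule.mem_map_of_mem hF
  rw [Submodule.map_span] at h1
  refine Submodule.span_le.mpr ?_ h1
  rintro _ ⟨f, hf, rfl⟩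
  exact h f hf


lemma cast_succ_pow (n j : ℕ) :
    ((n : k) + 1) ^ j = ∑ i ∈ Finset.range (j+1), (j.choose i : k) * (n : k) ^ i := by
  rw [add_pow]
  apply Finset.sum_congr rfl
  intro i _
  ring

lemma pw_succ_apply (j n : ℕ) : (pw (j+1) : ℕ → k) (n+1) - pw (j+1) n
    = (∑ i ∈ Finset.range (j+1), ((j+1).choose i : k) • (pw i : ℕ → k)) n := by
  simp only [pw, Finset.sum_apply, Pi.smul_apply, smul_eq_mul]
  push_cast
  rw [cast_succ_pow n (j+1), Finset.sum_range_succ]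
  simp

lemma sig_pw [CharZero k] (j : ℕ) : SigL k (pw j) ∈ PolyD k (j+1) := by
  induction j using Nat.strong_induction_on with
  | _ j ih =>
    have key : (pw (j+1) : ℕ → k)
        = SigL k (∑ i ∈ Finset.range (j+1), ((j+1).choose i : k) • (pw i : ℕ → k)) := by
      have h1 : SigL k (fun n => (pw (j+1) : ℕ → k) (n+1) - pw (j+1) n)
          = fun n => (pw (j+1) : ℕ → k) n - pw (j+1) 0 := SigL_del _
      have h2 : (fun n => (pw (j+1) : ℕ → k) n - pw (j+1) 0) = pw (j+1) := by
        funext n; simp [pw]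
      have h3 : (fun n => (pw (j+1) : ℕ → k) (n+1) - pw (j+1) n)
          = (∑ i ∈ Finset.range (j+1), ((j+1).choose i : k) • (pw i : ℕ → k)) := by
        funext n; exact pw_succ_apply j n
      rw [← h2, ← h1, h3]
    rw [map_sum, Finset.sum_range_succ] at key
    have hchoose : ((j+1).choose j : k) = (j+1 : k) := by
      rw [Nat.choose_succ_self_right]; push_cast; ring
    rw [hchoose] at key
    simp only [map_smul] at key
    have hne : ((j:k)+1) ≠ 0 := by
      have : ((j+1 : ℕ) : k) ≠ 0 := Nat.cast_ne_zero.mpr (by omega)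
      push_cast at this; exact this
    have hexpr : SigL k (pw j) = ((j:k)+1)⁻¹ •
        ((pw (j+1) : ℕ → k) - ∑ i ∈ Finset.range j, ((j+1).choose i : k) • SigL k (pw i)) := by
      rw [eq_comm, inv_smul_eq_iff₀ hne, key]
      abel
    rw [hexpr]
    refine Submodule.smul_mem _ _ (Submodule.sub_mem _ (pw_mem le_rfl) ?_)
    refine Submodule.sum_mem _ fun i hi => ?_
    rw [Finset.mem_range] at hi
    exact Submodule.smul_mem _ _ (polyD_mono (by omega) (ih i hi))

/-- target span set for summing a pure exponential-polynomial monomial -/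
def Tset (q : k) (c : ℤ) (j : ℕ) : Set (ℕ → k) :=
  {f | (∃ j' ≤ j, f = mof q c j') ∨ f = pw 0}

lemma mof_succ_apply (q : k) (hq0 : q ≠ 0) (c : ℤ) (j n : ℕ) :
    mof q c j (n+1) = q ^ c * ∑ i ∈ Finset.range (j+1), (j.choose i : k) * mof q c i n := by
  simp only [mof]
  have he : q ^ (c * ((n:ℤ)+1)) = q ^ c * q ^ (c * (n:ℤ)) := by
    rw [← zpow_add₀ hq0]; ring_nf
  push_cast
  rw [he, cast_succ_pow n j, Finset.sum_mul, Finset.mul_sum]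
  apply Finset.sum_congr rfl
  intro i _
  ring

lemma sig_mof (q : k) (hq0 : q ≠ 0) {c : ℤ} (hc : q ^ c ≠ 1) (j : ℕ) :
    SigL k (mof q c j) ∈ Submodule.span k (Tset q c j) := by
  induction j using Nat.strong_induction_on with
  | _ j ih =>
    have key : mof q c j - (mof q c j 0) • (pw 0 : ℕ → k)
        = (q^c - 1) • SigL k (mof q c j)
          + q^c • ∑ i ∈ Finset.range j, (j.choose i : k) • SigL k (mof q c i) := by
      have h3 : (fun n => mof q c j (n+1) - mof q c j n)
          = (q^c - 1) • mof q c j + q^c • ∑ i ∈ Finset.range j, (j.choose i : k) • mof q c i := by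
        funext n
        simp only [Pi.add_apply, Pi.smul_apply, Finset.sum_apply, smul_eq_mul]
        rw [mof_succ_apply q hq0 c j n, Finset.sum_range_succ]
        simp only [Nat.choose_self, Nat.cast_one, one_mul]
        rw [mul_add, Finset.mul_sum]
        ring
      have h1 : SigL k (fun n => mof q c j (n+1) - mof q c j n)
          = fun n => mof q c j n - mof q c j 0 := SigL_del _
      have h2 : (fun n => mof q c j n - mof q c j 0)
          = mof q c j - (mof q c j 0) • (pw 0 : ℕ → k) := by
        funext n; simp [pw]
      rw [← h2, ← h1, h3]
      rw [map_add, map_smul, map_smul, map_sum]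
      congr 1
      congr 1
      apply Finset.sum_congr rfl
      intro i _
      rw [map_smul]
    have hne : q^c - 1 ≠ 0 := sub_ne_zero.mpr hc
    have hexpr : SigL k (mof q c j) = (q^c - 1)⁻¹ •
        (mof q c j - (mof q c j 0) • (pw 0 : ℕ → k)
          - q^c • ∑ i ∈ Finset.range j, (j.choose i : k) • SigL k (mof q c i)) := by
      rw [eq_comm, inv_smul_eq_iff₀ hne, key]
      abel
    rw [hexpr]
    refine Submodule.smul_mem _ _ (Submodule.sub_mem _ (Submodule.sub_mem _
      (Submodule.subset_span (Or.inl ⟨j, le_rfl, rfl⟩))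
      (Submodule.smul_mem _ _ (Submodule.subset_span (Or.inr rfl)))) ?_)
    refine Submodule.smul_mem _ _ (Submodule.sum_mem _ fun i hi => ?_)
    rw [Finset.mem_range] at hi
    refine Submodule.smul_mem _ _ ?_
    refine Submodule.span_le.mpr ?_ (ih i hi)
    rintro f (⟨j', hj', rfl⟩ | rfl)
    · exact Submodule.subset_span (Or.inl ⟨j', by omega, rfl⟩)
    · exact Submodule.subset_span (Or.inr rfl)


lemma mof_zero_eq_pw (q : k) (j : ℕ) : mof q 0 j = (pw j : ℕ → k) := by
  funext n; simp [mof, pw]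

lemma mem_span_SS (q : k) {m : ℕ} {c : ℤ} {j : ℕ} (h0 : c = 0 → j ≤ m)
    (h1 : c ≠ 0 → j + 1 ≤ m) : mof q c j ∈ Submodule.span k (SS q m) :=
  Submodule.subset_span ⟨c, j, h0, h1, rfl⟩

/-- (M4) polynomial functions of low degree lie in the span of `SS`. -/
lemma polyD_le_span_SS (q : k) {d m : ℕ} (h : d ≤ m) :
    PolyD k d ≤ Submodule.span k (SS q m) := by
  apply Submodule.span_le.mpr
  rintro f ⟨j, hj, rfl⟩
  rw [← mof_zero_eq_pw q j]
  exact mem_span_SS q (fun _ => by omega) (fun hc => absurd rfl hc)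

/-- (M1) multiplication by `n - m` raises the level by one. -/
lemma span_SS_mul_linear (q : k) {m : ℕ} {F : ℕ → k}
    (hF : F ∈ Submodule.span k (SS q m)) :
    (fun n => F n * ((n : k) - (m : k))) ∈ Submodule.span k (SS q (m+1)) := by
  have := span_map (mulF (fun n => (n : k) - (m : k))) (S := SS q m) (S' := SS q (m+1))
    ?_ hF
  · exact this
  rintro f ⟨c, j, h0, h1, rfl⟩
  have : mulF (fun n => (n:k) - (m:k)) (mof q c j)
      = mof q c (j+1) - (m : k) • mof q c j := by
    funext n
    simp only [mulF_apply, mof, Pi.sub_apply, Pi.smul_apply, smul_eq_mul, pow_succ]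
    ring
  rw [this]
  exact Submodule.sub_mem _
    (mem_span_SS q (fun h => by omega) (fun h => by have := h1 h; omega))
    (Submodule.smul_mem _ _ (mem_span_SS q (fun h => by omega) (fun h => by have := h1 h; omega)))

/-- (M2) multiplication by `α uₑ + β` raises the level by one. -/
lemma span_SS_mul_exp (q : k) (hq0 : q ≠ 0) {m : ℕ} {F : ℕ → k}
    (hF : F ∈ Submodule.span k (SS q m)) (e : ℤ) (α β : k) :
    (fun n => F n * (α * q ^ (e * (n:ℤ)) + β)) ∈ Submodule.span k (SS q (m+1)) := by
  have := span_map (mulF (fun n => α * q ^ (e * (n:ℤ)) + β)) (S := SS q m) (S' := SS q (m+1))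
    ?_ hF
  · exact this
  rintro f ⟨c, j, h0, h1, rfl⟩
  have : mulF (fun n => α * q ^ (e * (n:ℤ)) + β) (mof q c j)
      = α • mof q (c + e) j + β • mof q c j := by
    funext n
    simp only [mulF_apply, mof, Pi.add_apply, Pi.smul_apply, smul_eq_mul]
    have : q ^ ((c + e) * (n:ℤ)) = q ^ (c * (n:ℤ)) * q ^ (e * (n:ℤ)) := by
      rw [← zpow_add₀ hq0]; ring_nf
    rw [this]
    ring
  rw [this]
  have hjm : j ≤ m := by rcases eq_or_ne c 0 with h | h; exacts [h0 h, by have := h1 h; omega]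
  exact Submodule.add_mem _
    (Submodule.smul_mem _ _ (mem_span_SS q (fun _ => by omega) (fun _ => by omega)))
    (Submodule.smul_mem _ _ (mem_span_SS q (fun _ => by omega) (fun _ => by omega)))

/-- (M3) summation of `u_b • F` raises the level by one. -/
lemma span_SS_sig (q : k) [CharZero k] (hq0 : q ≠ 0)
    (hq1 : ∀ c : ℤ, c ≠ 0 → q ^ c ≠ 1) {m : ℕ} {F : ℕ → k}
    (hF : F ∈ Submodule.span k (SS q m)) (b : ℤ) :
    SigL k (mulF (fun n => q ^ (b * (n:ℤ))) F) ∈ Submodule.span k (SS q (m+1)) := by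
  have := span_map ((SigL k).comp (mulF (fun n => q ^ (b * (n:ℤ)))))
    (S := SS q m) (S' := SS q (m+1)) ?_ hF
  · exact this
  rintro f ⟨c, j, h0, h1, rfl⟩
  have hjm : j ≤ m := by rcases eq_or_ne c 0 with h | h; exacts [h0 h, by have := h1 h; omega]
  have hmul : mulF (fun n => q ^ (b * (n:ℤ))) (mof q c j) = mof q (c + b) j := by
    funext n
    simp only [mulF_apply, mof]
    have : q ^ ((c + b) * (n:ℤ)) = q ^ (c * (n:ℤ)) * q ^ (b * (n:ℤ)) := by
      rw [← zpow_add₀ hq0]; ring_nf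
    rw [this]; ring
  rw [LinearMap.comp_apply, hmul]
  rcases eq_or_ne (c + b) 0 with h | h
  · rw [h, mof_zero_eq_pw]
    exact polyD_le_span_SS q (by omega) (sig_pw j)
  · refine Submodule.span_le.mpr ?_ (sig_mof q hq0 (hq1 _ h) j)
    rintro f (⟨j', hj', rfl⟩ | rfl)
    · exact mem_span_SS q (fun h' => absurd h' h) (fun _ => by omega)
    · rw [← mof_zero_eq_pw q 0]
      exact mem_span_SS q (fun _ => by omega) (fun h' => absurd rfl h')


/-- (M5) -/
lemma polyD_mul_exp (q : k) (hq0 : q ≠ 0) {d m : ℕ} (h : d + 1 ≤ m) (c : ℤ) {r : ℕ → k}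
    (hr : r ∈ PolyD k d) :
    (fun n => r n * q ^ (c * (n:ℤ))) ∈ Submodule.span k (SS q m) := by
  have := span_map (mulF (fun n => q ^ (c * (n:ℤ))))
    (S := {f | ∃ j ≤ d, f = pw j}) (S' := SS q m) ?_ hr
  · exact this
  rintro f ⟨j, hj, rfl⟩
  have : mulF (fun n => q ^ (c * (n:ℤ))) (pw j) = mof q c j := by
    funext n; simp [mulF_apply, pw, mof]
  rw [this]
  exact mem_span_SS q (fun _ => by omega) (fun _ => by omega)

lemma polyD_factor [CharZero k] {m : ℕ} {p : ℕ → k} (hp : p ∈ PolyD k m) (hpm : p m = 0) :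
    ∃ r ∈ PolyD k (m-1), (m = 0 → r = 0) ∧ ∀ n, p n = ((n:k) - (m:k)) * r n := by
  rcases Nat.eq_zero_or_pos m with hm | hm
  · subst hm
    have hp0 : p = 0 := polyD_eq_zero hp (fun n hn => by
      interval_cases n
      exact hpm)
    exact ⟨0, Submodule.zero_mem _, fun _ => rfl, fun n => by rw [hp0]; simp⟩
  · obtain ⟨P, hdeg, hrep⟩ := polyD_rep hp
    have hroot : P.eval ((m:k)) = 0 := by rw [← hrep m]; exact hpm
    obtain ⟨R, hR⟩ := (Polynomial.dvd_iff_isRoot.mpr hroot)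
    rcases eq_or_ne R 0 with hR0 | hR0
    · refine ⟨0, Submodule.zero_mem _, fun _ => rfl, fun n => ?_⟩
      rw [hrep n, hR, hR0, mul_zero, Polynomial.eval_zero, Pi.zero_apply, mul_zero]
    · have hX : (X - C ((m:k))) ≠ 0 := Polynomial.X_sub_C_ne_zero _
      have hnd : P.natDegree = 1 + R.natDegree := by
        rw [hR, Polynomial.natDegree_mul hX hR0, Polynomial.natDegree_X_sub_C]
      refine ⟨fun n => R.eval ((n:k)), rep_polyD R (by omega), fun h => absurd h (by omega),
        fun n => ?_⟩
      rw [hrep n, hR, Polynomial.eval_mul, Polynomial.eval_sub, Polynomial.eval_X,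
        Polynomial.eval_C]



/-! ### upper layer: realization in the adjoin algebra -/

def gg (q : k) (c : ℤ) : ℕ → k := fun N => ∑ i ∈ Finset.range N, q ^ (c * (i : ℤ))

lemma dq_eq_op' (q : k) (a : ℤ) : dq q a = op q 1 (gg q a) := rfl

lemma dq_mul_op' (q : k) (c : ℤ) (m : ℕ) (H : ℕ → k) :
    dq q c * op q m H = op q (m + 1) (fun n => H n * gg q c (n - m)) := by
  rw [dq_eq_op', op_mul_op]
  have h1 : (1 + m) = m + 1 := by omega
  rw [h1]

lemma gg_zero_eq (q : k) (N : ℕ) : gg q 0 N = (N : k) := by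
  simp [gg]

lemma gg_mul_q (q : k) (hq0 : q ≠ 0) (c : ℤ) (N : ℕ) :
    (q ^ c - 1) * gg q c N = q ^ (c * (N : ℤ)) - 1 := by
  induction N with
  | zero => simp [gg]
  | succ N ih =>
      have : gg q c (N + 1) = gg q c N + q ^ (c * (N : ℤ)) := by
        simp [gg, Finset.sum_range_succ]
      rw [this, mul_add, ih]
      have he : q ^ (c * ((N:ℤ) + 1)) = q ^ (c * (N : ℤ)) * q ^ c := by
        rw [← zpow_add₀ hq0]; ring_nf
      push_cast
      rw [he]
      ring

lemma funeq_gg_zero (q : k) (m : ℕ) (H : ℕ → k) (hvan : ∀ n, n < m → H n = 0) :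
    (fun n => H n * gg q 0 (n - m)) = fun n => H n * ((n : k) - (m : k)) := by
  funext n
  rcases lt_or_ge n m with h | h
  · rw [hvan n h, zero_mul, zero_mul]
  · rw [gg_zero_eq, Nat.cast_sub h]

lemma funeq_gg_exp (q : k) (hq0 : q ≠ 0) {c : ℤ} (hc : q ^ c ≠ 1) (m : ℕ) (H : ℕ → k)
    (hvan : ∀ n, n < m → H n = 0) :
    (fun n => H n * gg q c (n - m))
      = fun n => H n * (((q^c - 1)⁻¹ * q ^ (-(c * (m:ℤ)))) * q ^ (c * (n:ℤ))
          + (-(q^c - 1)⁻¹)) := by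
  funext n
  rcases lt_or_ge n m with h | h
  · rw [hvan n h, zero_mul, zero_mul]
  · congr 1
    have h1 : q ^ c - 1 ≠ 0 := sub_ne_zero.mpr hc
    have h2 : gg q c (n - m) = (q ^ (c * ((n - m : ℕ) : ℤ)) - 1) / (q ^ c - 1) := by
      rw [eq_div_iff h1, mul_comm _ (q^c -1), gg_mul_q q hq0]
    rw [h2]
    have h3 : ((n - m : ℕ) : ℤ) = (n : ℤ) - (m : ℤ) := by omega
    rw [h3]
    have h4 : q ^ (c * ((n:ℤ) - (m:ℤ))) = q ^ (c * (n:ℤ)) * q ^ (-(c * (m:ℤ))) := by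
      rw [← zpow_add₀ hq0]; ring_nf
    rw [h4, zpow_neg]
    have h5 : q ^ (c * (m:ℤ)) ≠ 0 := zpow_ne_zero _ hq0
    field_simp
    ring

lemma gg_vanish_high (q : k) (c : ℤ) (m : ℕ) (H : ℕ → k) (hvan : ∀ n, n < m → H n = 0) :
    ∀ n, n ≤ m → H n * gg q c (n - m) = 0 := by
  intro n hn
  rcases lt_or_eq_of_le hn with h | h
  · rw [hvan n h, zero_mul]
  · subst h
    have : n - n = 0 := by omega
    rw [this]
    simp [gg]

lemma op_zero_fun (q : k) (m : ℕ) : op q m (fun _ => (0:k)) = 0 := by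
  apply end_ext; intro n; simp [op_apply]

lemma op_congr (q : k) (m : ℕ) {F G : ℕ → k} (h : F = G) : op q m F = op q m G := by rw [h]

/-- membership of the basic building blocks -/
lemma dq_op_mem (q : k) (c : ℤ) (m : ℕ) {H : ℕ → k}
    (hH : op q m H ∈ Algebra.adjoin k (Set.range (dq q))) :
    op q (m+1) (fun n => H n * gg q c (n - m)) ∈ Algebra.adjoin k (Set.range (dq q)) := by
  rw [← dq_mul_op']
  exact mul_mem (Algebra.subset_adjoin ⟨c, rfl⟩) hH

/-- The heavy realization lemma. -/
lemma realize [CharZero k] (q : k) (hq0 : q ≠ 0) (hq1 : ∀ c : ℤ, c ≠ 0 → q ^ c ≠ 1) :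
    ∀ (m : ℕ) (F : ℕ → k), F ∈ Submodule.span k (SS q m) → (∀ n, n < m → F n = 0) →
      op q m F ∈ Algebra.adjoin k (Set.range (dq q)) := by
  intro m
  induction m with
  | zero =>
      intro F hF _
      have hsub : SS q 0 ⊆ {(pw 0 : ℕ → k)} := by
        rintro f ⟨c, j, h0, h1, rfl⟩
        rcases eq_or_ne c 0 with h | h
        · have : j = 0 := by have := h0 h; omega
          subst h; subst this
          rw [mof_zero_eq_pw]
          rfl
        · exact absurd (h1 h) (by omega)
      have := Submodule.span_le.mpr
        (hsub.trans (Set.singleton_subset_iff.mpr (Submodule.mem_span_singleton_self _))) hF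
      rw [Submodule.mem_span_singleton] at this
      obtain ⟨a, rfl⟩ := this
      rw [op_smul]
      refine Subalgebra.smul_mem _ ?_ a
      have : op q 0 (pw 0 : ℕ → k) = op q 0 (fun _ => (1:k)) := by
        apply op_congr; funext n; simp [pw]
      rw [this, op_const_one]
      exact one_mem _
  | succ m IH =>
      intro F hF hvan
      -- inner peeling claim
      have main : ∃ T : ℕ → k, (op q (m+1) T ∈ Algebra.adjoin k (Set.range (dq q)))
          ∧ (∀ n, n ≤ m → T n = 0) ∧ (fun n => F n - T n) ∈ PolyD k (m+1) := by
        clear hvan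
        induction hF using Submodule.span_induction with
        | mem f hf =>
            obtain ⟨c, j, h0, h1, rfl⟩ := hf
            rcases eq_or_ne c 0 with hc | hc
            · subst hc
              refine ⟨fun _ => 0, by rw [op_zero_fun]; exact Subalgebra.zero_mem _,
                fun n _ => rfl, ?_⟩
              have : (fun n => mof q 0 j n - 0) = (pw j : ℕ → k) := by
                funext n; rw [mof_zero_eq_pw]; simp
              rw [this]
              exact pw_mem (by have := h0 rfl; omega)
            · -- exponential generator
              have hjm : j ≤ m := by have := h1 hc; omega
              have hqc : q ^ c ≠ 1 := hq1 c hc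
              have hq1c : q ^ c - 1 ≠ 0 := sub_ne_zero.mpr hqc
              set lam := ((m:k))^j / (m.factorial : k) with hlam
              set p1 : ℕ → k := fun n => pw j n - lam * ffp k m n with hp1
              have hp1mem : p1 ∈ PolyD k m := by
                have h6 := Submodule.smul_mem (PolyD k m) lam (ffp_mem (k := k) m)
                have h7 : (fun n => lam * ffp k m n) = lam • ffp k m := by
                  funext n; simp
                have h8 := Submodule.sub_mem (PolyD k m) (pw_mem hjm) h6
                exact h8
              have hfacm : ((m.factorial : k)) ≠ 0 := Nat.cast_ne_zero.mpr (Nat.factorial_ne_zero m)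
              have hp1m : p1 m = 0 := by
                simp only [hp1, ffp_self, hlam, pw]
                field_simp
                ring
              obtain ⟨r, hr, hr0, hfac⟩ := polyD_factor hp1mem hp1m
              set ru : ℕ → k := fun n => r n * q ^ (c * (n:ℤ)) with hruDef
              have hru : ru ∈ Submodule.span k (SS q m) := by
                rcases Nat.eq_zero_or_pos m with hm0 | hm0
                · have : ru = 0 := by
                    funext n; simp [hruDef, hr0 hm0]
                  rw [this]; exact Submodule.zero_mem _
                · exact polyD_mul_exp q hq0 (by omega) c hr
              obtain ⟨ρ, hρ, hρval⟩ := interp ru m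
              set H1 : ℕ → k := fun n => ru n - ρ n with hH1def
              have hH1mem : H1 ∈ Submodule.span k (SS q m) :=
                Submodule.sub_mem _ hru (polyD_le_span_SS q le_rfl hρ)
              have hH1van : ∀ n, n < m → H1 n = 0 := fun n hn => by
                simp [hH1def, hρval n hn]
              set s : k := lam * (q^c - 1) * q^(c * (m:ℤ)) with hsdef
              set T : ℕ → k := fun n => H1 n * gg q 0 (n - m)
                + s * (ffp k m n * gg q c (n - m)) with hTdef
              refine ⟨T, ?_, ?_, ?_⟩
              · have hsplit : op q (m+1) T
                    = op q (m+1) (fun n => H1 n * gg q 0 (n-m))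
                      + s • op q (m+1) (fun n => ffp k m n * gg q c (n-m)) := by
                  rw [← op_smul, ← op_add]
                  apply op_congr
                  funext n
                  simp only [hTdef, Pi.add_apply, Pi.smul_apply, smul_eq_mul]
                rw [hsplit]
                refine Subalgebra.add_mem _ ?_ (Subalgebra.smul_mem _ ?_ _)
                · exact dq_op_mem q 0 m (IH H1 hH1mem hH1van)
                · exact dq_op_mem q c m (IH (ffp k m)
                    (polyD_le_span_SS q le_rfl (ffp_mem m)) (fun n h => ffp_vanish h))
              · intro n hn
                simp only [hTdef]
                rw [gg_vanish_high q 0 m H1 hH1van n hn,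
                    gg_vanish_high q c m (ffp k m) (fun n h => ffp_vanish h) n hn]
                ring
              · have hY : q ^ (c * (m:ℤ)) ≠ 0 := zpow_ne_zero _ hq0
                have hgz := funeq_gg_zero q m H1 hH1van
                have hge := funeq_gg_exp q hq0 hqc m (ffp k m) (fun n h => ffp_vanish h)
                have hTeq : (fun n => mof q c j n - T n)
                    = fun n => ρ n * ((n:k) - (m:k)) + (lam * q^(c*(m:ℤ))) * ffp k m n := by
                  funext n
                  have e1 := congrFun hgz n
                  have e2 := congrFun hge n
                  simp only [hTdef]
                  rw [e1, e2]
                  have e3 : (n:k)^j - lam * ffp k m n = ((n:k) - (m:k)) * r n := hfac n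
                  have e4 : s * (ffp k m n * (((q^c-1)⁻¹ * q^(-(c*(m:ℤ)))) * q^(c*(n:ℤ))
                      + (-(q^c-1)⁻¹)))
                      = lam * ffp k m n * q^(c*(n:ℤ)) - lam * q^(c*(m:ℤ)) * ffp k m n := by
                    rw [zpow_neg]
                    field_simp [hsdef]
                    ring
                  rw [e4]
                  simp only [hH1def, hruDef, mof, pw]
                  linear_combination (q ^ (c * (n:ℤ))) * e3
                rw [hTeq]
                have hA := polyD_mul_linear hρ ((m:k))
                have hB := Submodule.smul_mem (PolyD k (m+1)) (lam * q^(c*(m:ℤ)))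
                  (polyD_mono (by omega) (ffp_mem (k := k) m))
                exact Submodule.add_mem _ hA hB
        | zero =>
            refine ⟨fun _ => 0, by rw [op_zero_fun]; exact Subalgebra.zero_mem _,
                fun n _ => rfl, ?_⟩
            have : (fun n => (0:ℕ→k) n - 0) = (0:ℕ→k) := by funext n; simp
            rw [this]; exact Submodule.zero_mem _
        | add x y hx hy ihx ihy =>
            obtain ⟨T1, hT1, hv1, hd1⟩ := ihx
            obtain ⟨T2, hT2, hv2, hd2⟩ := ihy
            refine ⟨T1 + T2, ?_, fun n hn => by simp [hv1 n hn, hv2 n hn], ?_⟩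
            · have : op q (m+1) (T1 + T2) = op q (m+1) T1 + op q (m+1) T2 := op_add ..
              rw [this]; exact Subalgebra.add_mem _ hT1 hT2
            · have : (fun n => (x + y) n - (T1 + T2) n)
                  = (fun n => x n - T1 n) + fun n => y n - T2 n := by
                funext n; simp only [Pi.add_apply]; ring
              rw [this]; exact Submodule.add_mem _ hd1 hd2
        | smul a x hx ihx =>
            obtain ⟨T, hT, hv, hd⟩ := ihx
            refine ⟨a • T, ?_, fun n hn => by simp [hv n hn], ?_⟩
            · have : op q (m+1) (a • T) = a • op q (m+1) T := op_smul ..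
              rw [this]; exact Subalgebra.smul_mem _ hT a
            · have : (fun n => (a • x) n - (a • T) n) = a • fun n => x n - T n := by
                funext n; simp only [Pi.smul_apply, smul_eq_mul]; ring
              rw [this]; exact Submodule.smul_mem _ _ hd
      obtain ⟨T, hT, hTvan, hdiff⟩ := main
      set w : ℕ → k := fun n => F n - T n with hw
      have hwvan : ∀ n, n ≤ m → w n = 0 := fun n hn => by
        simp [hw, hvan n (by omega), hTvan n hn]
      have hwff := polyD_vanish_eq hdiff hwvan
      have hffA : op q (m+1) (ffp k (m+1)) ∈ Algebra.adjoin k (Set.range (dq q)) := by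
        have h1 : op q (m+1) (ffp k (m+1))
            = op q (m+1) (fun n => ffp k m n * gg q 0 (n - m)) := by
          apply op_congr
          rw [funeq_gg_zero q m (ffp k m) (fun n h => ffp_vanish h)]
          funext n; simp [ffp, Finset.prod_range_succ]
        rw [h1]
        exact dq_op_mem q 0 m (IH (ffp k m)
          (polyD_le_span_SS q le_rfl (ffp_mem m)) (fun n h => ffp_vanish h))
      have hwA : op q (m+1) w ∈ Algebra.adjoin k (Set.range (dq q)) := by
        rw [op_congr q (m+1) hwff, op_smul]
        exact Subalgebra.smul_mem _ hffA _
      have : op q (m+1) F = op q (m+1) T + op q (m+1) w := by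
        rw [← op_add]
        apply op_congr
        funext n; simp [hw]
      rw [this]
      exact Subalgebra.add_mem _ hT hwA


/-- decomposition of words in the generators -/
lemma word_decomp (q : k) (hq0 : q ≠ 0) (hq1 : ∀ c : ℤ, c ≠ 0 → q ^ c ≠ 1)
    {w : Module.End k k[X]} (hw : w ∈ Submonoid.closure (Set.range (dq q))) :
    ∃ (m : ℕ) (F : ℕ → k), F ∈ Submodule.span k (SS q m) ∧ (∀ n, n < m → F n = 0)
      ∧ w = op q m F := by
  induction hw using Submonoid.closure_induction_left with
  | one =>
      refine ⟨0, pw 0,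
        Submodule.subset_span ⟨0, 0, fun _ => le_rfl, fun h => absurd rfl h,
          (mof_zero_eq_pw q 0).symm⟩,
        fun n h => absurd h (by omega), ?_⟩
      have h1 : op q 0 (pw 0 : ℕ → k) = op q 0 (fun _ => (1:k)) := by
        apply op_congr; funext n; simp [pw]
      rw [h1, op_const_one]
  | mul_left x hx y hy ihy =>
      obtain ⟨a, rfl⟩ := hx
      obtain ⟨m, F, hF, hvan, rfl⟩ := ihy
      refine ⟨m+1, fun n => F n * gg q a (n - m), ?_, ?_, dq_mul_op' q a m F⟩
      · rcases eq_or_ne a 0 with h | h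
        · subst h
          rw [funeq_gg_zero q m F hvan]
          exact span_SS_mul_linear q hF
        · rw [funeq_gg_exp q hq0 (hq1 a h) m F hvan]
          exact span_SS_mul_exp q hq0 hF a _ _
      · intro n hn
        exact gg_vanish_high q a m F hvan n (by omega)

/-- Lemma L:intmono: for P in the subalgebra generated by the dq a
and any b, there is Q in the same subalgebra with [Q, lambda_x] = P ∘ sigma_b;
consequently [lambda_f ∘ Q, lambda_x] = lambda_f ∘ P ∘ sigma_b for every f. -/
theorem stmt6 [CharZero k] (q : k) (hq : Transcendental ℚ q)
    (P : Module.End k k[X]) (hP : P ∈ Algebra.adjoin k (Set.range (dq q))) (b : ℤ) :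
    ∃ Q ∈ Algebra.adjoin k (Set.range (dq q)),
      Q * lmul k X - lmul k X * Q = P * sigma q b ∧
      ∀ f : k[X],
        (lmul k f * Q) * lmul k X - lmul k X * (lmul k f * Q) = lmul k f * P * sigma q b := by
  have hq0 : q ≠ 0 := fun h => hq (h ▸ isAlgebraic_zero)
  have hq1 : ∀ c : ℤ, c ≠ 0 → q ^ c ≠ 1 := by
    intro c hc h1
    have key : ∀ N : ℕ, 0 < N → q ^ (N : ℕ) ≠ 1 := by
      intro N hN hqN
      apply hq
      refine ⟨X ^ N - 1, ?_, ?_⟩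
      · intro h
        have := congrArg (fun p => Polynomial.coeff p 0) h
        simp only [Polynomial.coeff_sub, Polynomial.coeff_X_pow, Polynomial.coeff_one,
          Polynomial.coeff_zero] at this
        rw [if_neg (by omega)] at this
        simp at this
      · simp [hqN]
    rcases lt_trichotomy c 0 with h | h | h
    · apply key (-c).toNat (by omega) ?_
      have h3 : (((-c).toNat : ℤ)) = -c := by omega
      have h2 : q ^ (((-c).toNat : ℕ)) = q ^ (-c : ℤ) := by rw [← zpow_natCast, h3]
      rw [h2, zpow_neg, h1, inv_one]
    · exact hc h
    · apply key c.toNat (by omega) ?_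
      have h3 : ((c.toNat : ℤ)) = c := by omega
      have h2 : q ^ ((c.toNat : ℕ)) = q ^ (c : ℤ) := by rw [← zpow_natCast, h3]
      rw [h2, h1]
  have key : ∀ P : Module.End k k[X],
      P ∈ Submodule.span k ((Submonoid.closure (Set.range (dq q)) : Submonoid _) : Set _) →
      ∃ Q ∈ Algebra.adjoin k (Set.range (dq q)),
        Q * lmul k X - lmul k X * Q = P * sigma q b := by
    intro P hP'
    induction hP' using Submodule.span_induction with
    | mem w hw =>
        obtain ⟨m, F, hF, hvan, rfl⟩ := word_decomp q hq0 hq1 hw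
        set G : ℕ → k := SigL k (mulF (fun n => q ^ (b * (n:ℤ))) F) with hG
        have hGvan : ∀ n, n < m + 1 → G n = 0 := by
          intro n hn
          simp only [hG, SigL_apply]
          apply Finset.sum_eq_zero
          intro i hi
          rw [Finset.mem_range] at hi
          have hFi : F i = 0 := hvan i (by omega)
          simp [mulF_apply, hFi]
        have hGmem : G ∈ Submodule.span k (SS q (m+1)) := span_SS_sig q hq0 hq1 hF b
        refine ⟨op q (m+1) G, realize q hq0 hq1 (m+1) G hGmem hGvan, ?_⟩
        rw [op_comm_lmulX q m G (fun n hn => hGvan n (by omega))]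
        rw [op_mul_sigma q hq0 m F b]
        apply op_congr
        funext n
        simp only [hG, SigL_apply, Finset.sum_range_succ, mulF_apply]
        ring
    | zero => exact ⟨0, Subalgebra.zero_mem _, by simp⟩
    | add x y hx hy ihx ihy =>
        obtain ⟨Q1, hQ1, he1⟩ := ihx
        obtain ⟨Q2, hQ2, he2⟩ := ihy
        refine ⟨Q1 + Q2, Subalgebra.add_mem _ hQ1 hQ2, ?_⟩
        have hsplit : (Q1 + Q2) * lmul k X - lmul k X * (Q1 + Q2)
            = (Q1 * lmul k X - lmul k X * Q1) + (Q2 * lmul k X - lmul k X * Q2) := by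
          rw [add_mul, mul_add]; abel
        rw [hsplit, he1, he2, add_mul]
    | smul a x hx ihx =>
        obtain ⟨Q, hQ, he⟩ := ihx
        refine ⟨a • Q, Subalgebra.smul_mem _ hQ a, ?_⟩
        have hsplit : (a • Q) * lmul k X - lmul k X * (a • Q)
            = a • (Q * lmul k X - lmul k X * Q) := by
          rw [smul_mul_assoc, mul_smul_comm, smul_sub]
        rw [hsplit, he, smul_mul_assoc]
  have hP' : P ∈ Submodule.span k
      ((Submonoid.closure (Set.range (dq q)) : Submonoid _) : Set _) := by
    rw [← Algebra.adjoin_eq_span]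
    exact hP
  obtain ⟨Q, hQ, he⟩ := key P hP'
  refine ⟨Q, hQ, he, ?_⟩
  intro f
  have hcomm : lmul k X * lmul k f = lmul k f * lmul k X := by
    simp only [lmul]
    rw [Module.End.mul_eq_comp, ← LinearMap.mulLeft_mul, mul_comm X f, LinearMap.mulLeft_mul,
      ← Module.End.mul_eq_comp]
  calc (lmul k f * Q) * lmul k X - lmul k X * (lmul k f * Q)
      = lmul k f * (Q * lmul k X - lmul k X * Q) := by
        rw [mul_sub, mul_assoc, ← mul_assoc (lmul k X), hcomm, mul_assoc]
    _ = lmul k f * (P * sigma q b) := by rw [he]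
    _ = lmul k f * P * sigma q b := by rw [mul_assoc]

end QDiff1
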